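/- Any two ℤ-coverings of a given Lie superalgebra g are isomorphic as ℤ-graded Lie superalgebras, via a unique isomorphism commuting with the covering projections. -/

import Mathlib

open scoped TensorProduct

/-- The sign `(-1)^(i*j)` for integer degrees `i j`. -/
def ssign (i j : ℤ) : ℤ := if Even (i * j) then 1 else -1

/-- A Lie superalgebra structure on a `K`-vector space `g`. -/
structure LieSuperAlgebra (K : Type*) [Field K] (g : Type*) [AddCommGroup g] [Module K g] where
  grading : ZMod 2 → Submodule K g
  isInternal : DirectSum.IsInternal grading
  bracket : g →ₗ[K] g →ₗ[K] g
  bracket_mem : ∀ (i j : ZMod 2) (x y : g), x ∈ grading i → y ∈ grading j →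
    bracket x y ∈ grading (i + j)
  super_antisymm : ∀ (i j : ZMod 2) (x y : g), x ∈ grading i → y ∈ grading j →
    bracket x y = (-((-1 : ℤ) ^ (i.val * j.val))) • bracket y x
  super_jacobi : ∀ (i j : ZMod 2) (x y z : g), x ∈ grading i → y ∈ grading j →
    bracket x (bracket y z) =
      bracket (bracket x y) z + ((-1 : ℤ) ^ (i.val * j.val)) • bracket y (bracket x z)

/-- A ℤ-graded Lie superalgebra with parity-matched grading. -/
structure ZGradedLieSuperAlgebra (K : Type*) [Field K] (p : Type*)
    [AddCommGroup p] [Module K p] where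
  grading : ℤ → Submodule K p
  isInternal : DirectSum.IsInternal grading
  bracket : p →ₗ[K] p →ₗ[K] p
  bracket_mem : ∀ (i j : ℤ) (x y : p), x ∈ grading i → y ∈ grading j →
    bracket x y ∈ grading (i + j)
  super_antisymm : ∀ (i j : ℤ) (x y : p), x ∈ grading i → y ∈ grading j →
    bracket x y = (-(ssign i j)) • bracket y x
  super_jacobi : ∀ (i j : ℤ) (x y z : p), x ∈ grading i → y ∈ grading j →
    bracket x (bracket y z) =
      bracket (bracket x y) z + (ssign i j) • bracket y (bracket x z)

variable {K : Type*} [Field K]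
variable {g g' g'' p p' p'' a a' : Type*}
  [AddCommGroup g] [Module K g] [AddCommGroup g'] [Module K g']
  [AddCommGroup g''] [Module K g'']
  [AddCommGroup p] [Module K p] [AddCommGroup p'] [Module K p']
  [AddCommGroup p''] [Module K p'']
  [AddCommGroup a] [Module K a] [AddCommGroup a'] [Module K a']

/-- An (even) homomorphism of Lie superalgebras. -/
def IsSuperHom (G : LieSuperAlgebra K g) (G' : LieSuperAlgebra K g') (f : g →ₗ[K] g') : Prop :=
  (∀ (i : ZMod 2) (x : g), x ∈ G.grading i → f x ∈ G'.grading i) ∧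
  ∀ x y : g, f (G.bracket x y) = G'.bracket (f x) (f y)

/-- A ℤ-graded homomorphism of ℤ-graded Lie superalgebras. -/
def IsZGradedHom (P : ZGradedLieSuperAlgebra K p) (P' : ZGradedLieSuperAlgebra K p')
    (f : p →ₗ[K] p') : Prop :=
  (∀ (s : ℤ) (x : p), x ∈ P.grading s → f x ∈ P'.grading s) ∧
  ∀ x y : p, f (P.bracket x y) = P'.bracket (f x) (f y)

/-- A homomorphism from a ℤ-graded Lie superalgebra to a Lie superalgebra:
an even linear map preserving brackets, sending degree `s` into parity `s mod 2`. -/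
def IsHomToSuper (P : ZGradedLieSuperAlgebra K p) (G : LieSuperAlgebra K g)
    (f : p →ₗ[K] g) : Prop :=
  (∀ (s : ℤ) (x : p), x ∈ P.grading s → f x ∈ G.grading (s : ZMod 2)) ∧
  ∀ x y : p, f (P.bracket x y) = G.bracket (f x) (f y)

/-- `(P, π)` is a ℤ-covering of the Lie superalgebra `G`: a homomorphism restricting to a
bijection `p_s → g_{s̄}` for every `s : ℤ`. -/
def IsZCovering (G : LieSuperAlgebra K g) (P : ZGradedLieSuperAlgebra K p)
    (π : p →ₗ[K] g) : Prop :=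
  IsHomToSuper P G π ∧
  ∀ s : ℤ, Set.BijOn π (P.grading s : Set p) (G.grading (s : ZMod 2) : Set g)

/-- `(P, π)` is a ℤ^{≥0}-covering of the Lie superalgebra `G`. -/
def IsZNonnegCovering (G : LieSuperAlgebra K g) (P : ZGradedLieSuperAlgebra K p)
    (π : p →ₗ[K] g) : Prop :=
  IsHomToSuper P G π ∧ (∀ s : ℤ, s < 0 → P.grading s = ⊥) ∧
  ∀ s : ℤ, 0 ≤ s → Set.BijOn π (P.grading s : Set p) (G.grading (s : ZMod 2) : Set g)

/-- Two linear maps out of a ℤ-graded Lie superalgebra agreeing on each graded piece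
are equal. -/
theorem zcov_ext (P : ZGradedLieSuperAlgebra K p) (u v : p →ₗ[K] a)
    (h : ∀ (s : ℤ) (x : p), x ∈ P.grading s → u x = v x) : u = v := by
  ext x
  have hx : x ∈ ⨆ s, P.grading s := by
    rw [P.isInternal.submodule_iSup_eq_top]; trivial
  refine Submodule.iSup_induction (motive := fun x => u x = v x) _ hx h (by simp) ?_
  intro x y hx hy
  simp [map_add, hx, hy]

/-- Construction of the comparison map between two ℤ-coverings: it is graded and commutes
with the projections, pointwise on graded pieces. -/
theorem zcov_exists_map
    (G : LieSuperAlgebra K g)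
    (P : ZGradedLieSuperAlgebra K p) (π : p →ₗ[K] g) (hcov : IsZCovering G P π)
    (P' : ZGradedLieSuperAlgebra K p') (π' : p' →ₗ[K] g) (hcov' : IsZCovering G P' π') :
    ∃ F : p →ₗ[K] p', ∀ (s : ℤ) (x : p), x ∈ P.grading s →
      F x ∈ P'.grading s ∧ π' (F x) = π x := by
  have hmem : ∀ s : ℤ, ∀ x ∈ P.grading s, π x ∈ G.grading ((s : ZMod 2)) := fun s x hx =>
    hcov.1.1 s x hx
  have hmem' : ∀ s : ℤ, ∀ x ∈ P'.grading s, π' x ∈ G.grading ((s : ZMod 2)) := fun s x hx =>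
    hcov'.1.1 s x hx
  have hbij : ∀ s : ℤ, Function.Bijective (π.restrict (hmem s)) := by
    intro s
    constructor
    · rintro ⟨x, hx⟩ ⟨y, hy⟩ hxy
      exact Subtype.ext ((hcov.2 s).injOn hx hy (congrArg Subtype.val hxy))
    · rintro ⟨y, hy⟩
      obtain ⟨x, hx, hxy⟩ := (hcov.2 s).surjOn hy
      exact ⟨⟨x, hx⟩, Subtype.ext hxy⟩
  have hbij' : ∀ s : ℤ, Function.Bijective (π'.restrict (hmem' s)) := by
    intro s
    constructor
    · rintro ⟨x, hx⟩ ⟨y, hy⟩ hxy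
      exact Subtype.ext ((hcov'.2 s).injOn hx hy (congrArg Subtype.val hxy))
    · rintro ⟨y, hy⟩
      obtain ⟨x, hx, hxy⟩ := (hcov'.2 s).surjOn hy
      exact ⟨⟨x, hx⟩, Subtype.ext hxy⟩
  let e : ∀ s : ℤ, P.grading s ≃ₗ[K] G.grading ((s : ZMod 2)) := fun s =>
    LinearEquiv.ofBijective _ (hbij s)
  let e' : ∀ s : ℤ, P'.grading s ≃ₗ[K] G.grading ((s : ZMod 2)) := fun s =>
    LinearEquiv.ofBijective _ (hbij' s)
  let D := LinearEquiv.ofBijective (DirectSum.coeLinearMap P.grading) P.isInternal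
  let F : p →ₗ[K] p' :=
    (DirectSum.toModule K ℤ p' fun s =>
      (P'.grading s).subtype ∘ₗ ((e' s).symm.toLinearMap ∘ₗ (e s).toLinearMap)) ∘ₗ
      D.symm.toLinearMap
  refine ⟨F, fun s x hx => ?_⟩
  have hD : D.symm x = DirectSum.lof K ℤ (fun s => P.grading s) s ⟨x, hx⟩ := by
    apply D.injective
    rw [LinearEquiv.apply_symm_apply]
    show x = D (DirectSum.lof K ℤ (fun s => P.grading s) s ⟨x, hx⟩)
    simp [D, DirectSum.lof_eq_of, LinearEquiv.ofBijective_apply, DirectSum.coeLinearMap_of]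
    exact (DirectSum.coeLinearMap_of P.grading s ⟨x, hx⟩).symm
  have hFx : F x = ((e' s).symm (e s ⟨x, hx⟩) : p') := by
    simp only [F, LinearMap.comp_apply, LinearEquiv.coe_toLinearMap, hD,
      DirectSum.toModule_lof]
    rfl
  refine ⟨hFx ▸ ((e' s).symm (e s ⟨x, hx⟩)).2, ?_⟩
  rw [hFx]
  have h1 : π' (((e' s).symm (e s ⟨x, hx⟩) : P'.grading s) : p') =
      ((e' s) ((e' s).symm (e s ⟨x, hx⟩)) : g) := by
    rw [show ((e' s) ((e' s).symm (e s ⟨x, hx⟩))) =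
      π'.restrict (hmem' s) ((e' s).symm (e s ⟨x, hx⟩)) from rfl]
    rw [LinearMap.restrict_coe_apply]
  rw [h1, (e' s).apply_symm_apply]
  rfl

/-- any two ℤ-coverings of a Lie superalgebra `g` are isomorphic via a unique
ℤ-graded isomorphism commuting with the covering projections. -/
theorem zCovering_unique_up_to_iso
    (G : LieSuperAlgebra K g)
    (P : ZGradedLieSuperAlgebra K p) (π : p →ₗ[K] g) (hcov : IsZCovering G P π)
    (P' : ZGradedLieSuperAlgebra K p') (π' : p' →ₗ[K] g) (hcov' : IsZCovering G P' π') :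
    ∃! f : p →ₗ[K] p', IsZGradedHom P P' f ∧ Function.Bijective f ∧ π'.comp f = π := by
  obtain ⟨F, hF⟩ := zcov_exists_map G P π hcov P' π' hcov'
  obtain ⟨F', hF'⟩ := zcov_exists_map G P' π' hcov' P π hcov
  have hcomp : π'.comp F = π := zcov_ext P _ _ (fun s x hx => (hF s x hx).2)
  have hFF' : F'.comp F = LinearMap.id := by
    refine zcov_ext P _ _ fun s x hx => ?_
    have h1 := hF s x hx
    have h2 := hF' s _ h1.1
    have : F' (F x) = x := (hcov.2 s).injOn h2.1 hx (by rw [h2.2, h1.2])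
    simpa using this
  have hF'F : F.comp F' = LinearMap.id := by
    refine zcov_ext P' _ _ fun s x hx => ?_
    have h1 := hF' s x hx
    have h2 := hF s _ h1.1
    have : F (F' x) = x := (hcov'.2 s).injOn h2.1 hx (by rw [h2.2, h1.2])
    simpa using this
  have hbij : Function.Bijective F := by
    constructor
    · intro x y hxy
      have hx := LinearMap.congr_fun hFF' x
      have hy := LinearMap.congr_fun hFF' y
      simp only [LinearMap.comp_apply, LinearMap.id_apply] at hx hy
      rw [← hx, ← hy, hxy]
    · intro y
      refine ⟨F' y, ?_⟩
      have := LinearMap.congr_fun hF'F y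
      simpa using this
  have hbr_graded : ∀ (i j : ℤ) (x y : p), x ∈ P.grading i → y ∈ P.grading j →
      F (P.bracket x y) = P'.bracket (F x) (F y) := by
    intro i j x y hx hy
    have hb := P.bracket_mem i j x y hx hy
    have hmemL : F (P.bracket x y) ∈ P'.grading (i + j) := (hF (i + j) _ hb).1
    have hmemR : P'.bracket (F x) (F y) ∈ P'.grading (i + j) :=
      P'.bracket_mem i j _ _ (hF i x hx).1 (hF j y hy).1
    refine (hcov'.2 (i + j)).injOn hmemL hmemR ?_
    rw [(hF (i + j) _ hb).2, hcov.1.2, hcov'.1.2, (hF i x hx).2, (hF j y hy).2]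
  have hbr1 : ∀ (i : ℤ) (x : p), x ∈ P.grading i →
      ∀ y, F (P.bracket x y) = P'.bracket (F x) (F y) := by
    intro i x hx y
    have h := zcov_ext P (F ∘ₗ P.bracket x) ((P'.bracket (F x)) ∘ₗ F)
      (fun j y hy => hbr_graded i j x y hx hy)
    simpa using LinearMap.congr_fun h y
  have hbr : ∀ x y : p, F (P.bracket x y) = P'.bracket (F x) (F y) := by
    intro x y
    have h := zcov_ext P (F ∘ₗ P.bracket.flip y) ((P'.bracket.flip (F y)) ∘ₗ F)
      (fun i x hx => by simpa using hbr1 i x hx y)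
    simpa using LinearMap.congr_fun h x
  refine ⟨F, ⟨⟨fun s x hx => (hF s x hx).1, hbr⟩, hbij, hcomp⟩, ?_⟩
  rintro f ⟨⟨hfgr, _⟩, _, hfcomp⟩
  refine zcov_ext P _ _ fun s x hx => ?_
  refine (hcov'.2 s).injOn (hfgr s x hx) (hF s x hx).1 ?_
  rw [(hF s x hx).2]
  exact LinearMap.congr_fun hfcomp x
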